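/- arXiv:2009.11453 — 5 statements merged into one kernel-verified Lean document; each statement's English description precedes it below -/
import Mathlib

section
/- Let x ≥ 3 be an integer, n ≥ 1 an integer, 2 ≤ z ≤ x−2 an integer, and t_h, t_1, ..., t_x positive reals with t_h < t_1. Then (1+n)^{x-2}·t_h + Σ_{j=1}^{z-1} (1+n)^{x-2-j}·t_j + Σ_{j=z+1}^{x-1} (1+n)^{x-1-j}·t_j < Σ_{j=1}^{x} (1+n)^{x-j}·t_j. -/
theorem stmt5 (n x z : ℕ) (hn : 1 ≤ n) (hx : 3 ≤ x) (hz : 2 ≤ z) (hzx : z ≤ x - 2)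
    (th : ℝ) (t : ℕ → ℝ) (hth : 0 < th) (ht : ∀ j ∈ Finset.Icc 1 x, 0 < t j)
    (h : th < t 1) :
    (1 + n : ℝ) ^ (x - 2) * th + (∑ j ∈ Finset.Icc 1 (z - 1), (1 + n : ℝ) ^ (x - 2 - j) * t j)
      + (∑ j ∈ Finset.Icc (z + 1) (x - 1), (1 + n : ℝ) ^ (x - 1 - j) * t j)
      < ∑ j ∈ Finset.Icc 1 x, (1 + n : ℝ) ^ (x - j) * t j := by
  have hn1 : (1:ℝ) ≤ n := by exact_mod_cast hn
  set a : ℝ := 1 + n with hadef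
  have ha : (2:ℝ) ≤ a := by simp [hadef]; linarith
  have ha1 : (1:ℝ) ≤ a := by linarith
  have ha0 : (0:ℝ) < a := by linarith
  set f : ℕ → ℝ := fun j => a ^ (x - j) * t j with hf
  -- split RHS
  have e1 : ∑ j ∈ Finset.Ioc 0 (z-1) , f j + ∑ j ∈ Finset.Ioc (z-1) x, f j
      = ∑ j ∈ Finset.Ioc 0 x, f j :=
    Finset.sum_Ioc_consecutive _ (by omega) (by omega)
  have e2 : ∑ j ∈ Finset.Ioc (z-1) z, f j + ∑ j ∈ Finset.Ioc z x, f j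
      = ∑ j ∈ Finset.Ioc (z-1) x, f j :=
    Finset.sum_Ioc_consecutive _ (by omega) (by omega)
  have e3 : ∑ j ∈ Finset.Ioc z (x-1), f j + ∑ j ∈ Finset.Ioc (x-1) x, f j
      = ∑ j ∈ Finset.Ioc z x, f j :=
    Finset.sum_Ioc_consecutive _ (by omega) (by omega)
  have e4 : ∑ j ∈ Finset.Ioc 0 1, f j + ∑ j ∈ Finset.Ioc 1 (z-1), f j
      = ∑ j ∈ Finset.Ioc 0 (z-1), f j :=
    Finset.sum_Ioc_consecutive _ (by omega) (by omega)
  have s1 : ∑ j ∈ Finset.Ioc (z-1) z, f j = f z := by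
    have : Finset.Ioc (z-1) z = {z} := by
      ext m; simp only [Finset.mem_Ioc, Finset.mem_singleton]; omega
    rw [this, Finset.sum_singleton]
  have s2 : ∑ j ∈ Finset.Ioc (x-1) x, f j = f x := by
    have : Finset.Ioc (x-1) x = {x} := by
      ext m; simp only [Finset.mem_Ioc, Finset.mem_singleton]; omega
    rw [this, Finset.sum_singleton]
  have s3 : ∑ j ∈ Finset.Ioc 0 1, f j = f 1 := by
    simp
  have hIcc : ∀ b c : ℕ, Finset.Icc (b+1) c = Finset.Ioc b c := fun b c => Finset.Icc_add_one_left_eq_Ioc b c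
  have hRHS : ∑ j ∈ Finset.Icc 1 x, f j
      = f 1 + ∑ j ∈ Finset.Ioc 1 (z-1), f j + f z + ∑ j ∈ Finset.Ioc z (x-1), f j + f x := by
    rw [show (1:ℕ) = 0 + 1 from rfl, hIcc 0 x]
    rw [← e1, ← e2, ← e3, ← e4, s1, s2, s3]; ring
  -- split LHS first sum
  set g : ℕ → ℝ := fun j => a ^ (x - 2 - j) * t j with hg
  have e5 : ∑ j ∈ Finset.Ioc 0 1, g j + ∑ j ∈ Finset.Ioc 1 (z-1), g j
      = ∑ j ∈ Finset.Ioc 0 (z-1), g j :=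
    Finset.sum_Ioc_consecutive _ (by omega) (by omega)
  have hLHS1 : ∑ j ∈ Finset.Icc 1 (z-1), g j = g 1 + ∑ j ∈ Finset.Ioc 1 (z-1), g j := by
    rw [show (1:ℕ) = 0 + 1 from rfl, hIcc 0 (z-1), ← e5]
    simp
  -- termwise comparisons
  have tpos : ∀ j, 1 ≤ j → j ≤ x → 0 < t j := fun j h1 h2 =>
    ht j (Finset.mem_Icc.mpr ⟨h1, h2⟩)
  have cmp1 : ∑ j ∈ Finset.Ioc 1 (z-1), g j ≤ ∑ j ∈ Finset.Ioc 1 (z-1), f j := by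
    apply Finset.sum_le_sum
    intro j hj
    rw [Finset.mem_Ioc] at hj
    have := tpos j (by omega) (by omega)
    exact mul_le_mul_of_nonneg_right (pow_le_pow_right₀ ha1 (by omega)) this.le
  have cmp2 : ∑ j ∈ Finset.Icc (z+1) (x-1), (a ^ (x - 1 - j) * t j)
      ≤ ∑ j ∈ Finset.Ioc z (x-1), f j := by
    rw [hIcc z (x-1)]
    apply Finset.sum_le_sum
    intro j hj
    rw [Finset.mem_Ioc] at hj
    have := tpos j (by omega) (by omega)
    exact mul_le_mul_of_nonneg_right (pow_le_pow_right₀ ha1 (by omega)) this.le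
  -- main strict piece
  have t1pos : 0 < t 1 := tpos 1 le_rfl (by omega)
  have key : a ^ (x-2) * th + g 1 < f 1 := by
    have h1 : a ^ (x-2) * th < a ^ (x-2) * t 1 :=
      mul_lt_mul_of_pos_left h (pow_pos ha0 _)
    have h2 : a ^ (x-2) + a ^ (x-2-1) ≤ a ^ (x-1) := by
      have ex1 : a ^ (x-2) = a ^ (x-3) * a := by
        rw [← pow_succ]; congr 1; omega
      have ex2 : a ^ (x-2-1) = a ^ (x-3) := by rw [show x-2-1 = x-3 from by omega]
      have ex3 : a ^ (x-1) = a ^ (x-3) * a ^ 2 := by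
        rw [← pow_add]; congr 1; omega
      rw [ex1, ex2, ex3]
      have hp : (0:ℝ) < a ^ (x-3) := pow_pos ha0 _
      have hq : a + 1 ≤ a ^ 2 := by nlinarith
      nlinarith
    have h3 : (a ^ (x-2) + a ^ (x-2-1)) * t 1 ≤ a ^ (x-1) * t 1 :=
      mul_le_mul_of_nonneg_right h2 t1pos.le
    rw [add_mul] at h3
    show a ^ (x-2) * th + a ^ (x-2-1) * t 1 < a ^ (x-1) * t 1
    linarith
  have fzpos : 0 < f z := mul_pos (pow_pos ha0 _) (tpos z (by omega) (by omega))
  have fxpos : 0 < f x := mul_pos (pow_pos ha0 _) (tpos x (by omega) le_rfl)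
  rw [hRHS, hLHS1]
  linarith
end

section
/- Let n ≥ 1 and let E_1, ..., E_x be defined from initial health values v_1, ..., v_x ∈ (0,1) by E_1 = v_1 and E_k = v_k − n·Σ_{j=2}^{k}(1 − E_{j-1}) for k ≥ 2. Then E_k = n(1+n)^{k-2}·v_1 + n(1+n)^{k-3}·v_2 + ... + n·v_{k-1} + v_k − n·Σ_{j=0}^{k-2}(1+n)^j for all k ∈ {2, ..., x}. -/
theorem stmt7 (n x : ℕ) (hn : 1 ≤ n) (v E : ℕ → ℝ)
    (hv : ∀ j ∈ Finset.Icc 1 x, v j ∈ Set.Ioo (0 : ℝ) 1)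
    (hE1 : E 1 = v 1)
    (hErec : ∀ k ∈ Finset.Icc 2 x, E k = v k - n * ∑ j ∈ Finset.Icc 2 k, (1 - E (j - 1))) :
    ∀ k ∈ Finset.Icc 2 x,
      E k = (∑ j ∈ Finset.Icc 1 (k - 1), n * (1 + n : ℝ) ^ (k - 1 - j) * v j) + v k
        - n * ∑ j ∈ Finset.range (k - 1), (1 + n : ℝ) ^ j := by
  intro k hk
  rw [Finset.mem_Icc] at hk
  obtain ⟨h2, hx⟩ := hk
  induction k, h2 using Nat.le_induction with
  | base =>
    have h1 := hErec 2 (Finset.mem_Icc.mpr ⟨le_refl 2, hx⟩)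
    simp only [Finset.Icc_self, Finset.sum_singleton] at h1
    norm_num at h1 ⊢
    rw [h1, hE1]; ring
  | succ k hk ih =>
    obtain ⟨m, rfl⟩ : ∃ m, k = m + 1 := ⟨k - 1, by omega⟩
    have hkx : m + 1 ≤ x := by omega
    have ihk := ih hkx
    have hrec1 := hErec (m + 2) (Finset.mem_Icc.mpr ⟨by omega, hx⟩)
    have hrec0 := hErec (m + 1) (Finset.mem_Icc.mpr ⟨hk, hkx⟩)
    rw [Finset.sum_Icc_succ_top (by omega : 2 ≤ m + 2),
      show m + 2 - 1 = m + 1 from rfl] at hrec1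
    have key : E (m + 2) = v (m + 2) - v (m + 1) - n + (1 + n) * E (m + 1) := by
      have hS : (n : ℝ) * ∑ j ∈ Finset.Icc 2 (m + 1), (1 - E (j - 1))
          = v (m + 1) - E (m + 1) := by linarith [hrec0]
      rw [hrec1, mul_add, hS]; ring
    have hsum1 : ∑ j ∈ Finset.Icc 1 (m + 1), (n : ℝ) * (1 + n) ^ (m + 1 - j) * v j
        = (1 + n) * (∑ j ∈ Finset.Icc 1 m, (n : ℝ) * (1 + n) ^ (m - j) * v j)
          + n * v (m + 1) := by
      rw [Finset.sum_Icc_succ_top (by omega : 1 ≤ m + 1), Finset.mul_sum]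
      have : ∀ j ∈ Finset.Icc 1 m,
          (1 + (n : ℝ)) * ((n : ℝ) * (1 + n) ^ (m - j) * v j)
            = (n : ℝ) * (1 + n) ^ (m + 1 - j) * v j := by
        intro j hj
        rw [Finset.mem_Icc] at hj
        rw [show m + 1 - j = (m - j) + 1 by omega, pow_succ]
        ring
      rw [Finset.sum_congr rfl this]
      simp
    have hsum2 : ∑ j ∈ Finset.range (m + 1), ((1 : ℝ) + n) ^ j
        = (1 + n) * (∑ j ∈ Finset.range m, ((1 : ℝ) + n) ^ j) + 1 := by
      rw [Finset.sum_range_succ', Finset.mul_sum]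
      simp only [pow_succ, pow_zero]
      congr 1
      apply Finset.sum_congr rfl
      intro j _
      ring
    simp only [show m + 1 + 1 - 1 = m + 1 from rfl, show m + 1 - 1 = m from rfl] at ihk ⊢
    rw [hsum1, hsum2, key, ihk]
    ring
end

section
/- Let n ≥ 1 and x ≥ 2. For initial healths v_1,...,v_x ∈ (0,1), the total repair time T' = Σ_{k=1}^{x} (1−E_k)/Δ_inc (with E_k as the health of the k-th node when reached, E_1 = v_1, E_k = v_k − n·Σ_{j=2}^{k}(1−E_{j-1})) is minimized over all orderings of the x nodes by sorting them in decreasing order of initial health. Formally: for any permutation σ of {1,...,x}, if v_{σ(1)} ≥ v_{σ(2)} ≥ ... ≥ v_{σ(x)} fails, then the sorted order yields a total time less than or equal to that of σ. -/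
/-- `(E_k, S_k)` where `E_k` is the health of the `k`-th targeted node when reached
(`E_1 = w 1`, `E_k = w k - n·∑_{j=2}^{k}(1 - E_{j-1})`) and `S_k = ∑_{j=1}^{k}(1 - E_j)`. -/
noncomputable def repairES (n : ℕ) (w : ℕ → ℝ) : ℕ → ℝ × ℝ
  | 0 => (0, 0)
  | k + 1 =>
    let s := (repairES n w k).2
    let e := w (k + 1) - n * s
    (e, s + (1 - e))

/-- Health of the `k`-th targeted node when it is reached. -/
noncomputable def repairE (n : ℕ) (w : ℕ → ℝ) (k : ℕ) : ℝ := (repairES n w k).1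

/-- Total repair time `T' = ∑_{k=1}^{x} (1 - E_k)/Δ_inc`. -/
noncomputable def totalRepairTime (n x : ℕ) (Δinc : ℝ) (w : ℕ → ℝ) : ℝ :=
  ∑ k ∈ Finset.Icc 1 x, (1 - repairE n w k) / Δinc

open Finset

/-- Closed form for `S_m`. -/
lemma repairS_eq (n : ℕ) (w : ℕ → ℝ) (m : ℕ) :
    (repairES n w m).2 = ∑ k ∈ Icc 1 m, ((n : ℝ) + 1) ^ (m - k) * (1 - w k) := by
  induction m with
  | zero => simp [repairES]
  | succ m ih =>
    rw [← Finset.insert_Icc_right_eq_Icc_add_one (by omega), Finset.sum_insert (by simp)]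
    have hsum : ∑ k ∈ Icc 1 m, ((n : ℝ) + 1) ^ (m + 1 - k) * (1 - w k)
        = ((n : ℝ) + 1) * ∑ k ∈ Icc 1 m, ((n : ℝ) + 1) ^ (m - k) * (1 - w k) := by
      rw [Finset.mul_sum]
      refine Finset.sum_congr rfl fun k hk => ?_
      have hk' : k ≤ m := (Finset.mem_Icc.1 hk).2
      have he : m + 1 - k = (m - k) + 1 := by omega
      rw [he, pow_succ]; ring
    rw [hsum, ← ih]
    show (repairES n w m).2 + (1 - (w (m+1) - n * (repairES n w m).2)) = _
    simp; ring

/-- `∑_{k=1}^m (1 - E_k) = S_m`. -/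
lemma sum_oneSubE (n : ℕ) (w : ℕ → ℝ) (m : ℕ) :
    ∑ k ∈ Icc 1 m, (1 - repairE n w k) = (repairES n w m).2 := by
  induction m with
  | zero => simp [repairES]
  | succ m ih =>
    rw [← Finset.insert_Icc_right_eq_Icc_add_one (by omega), Finset.sum_insert (by simp), ih]
    show (1 - (repairES n w (m+1)).1) + (repairES n w m).2 = _
    show _ = (repairES n w m).2 + (1 - (w (m+1) - n * (repairES n w m).2))
    show (1 - (w (m+1) - n * (repairES n w m).2)) + (repairES n w m).2 = _
    ring

/-- Extract a permutation of `ℕ` supported in `s` from equal multiset images. -/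
lemma exists_perm_of_map_eq (s : Finset ℕ) :
    ∀ (f g : ℕ → ℝ), Multiset.map f s.val = Multiset.map g s.val →
      ∃ σ : Equiv.Perm ℕ, {x | σ x ≠ x} ⊆ (s : Set ℕ) ∧ ∀ i ∈ s, f i = g (σ i) := by
  classical
  induction s using Finset.strongInduction with
  | _ s ih =>
    intro f g h
    rcases s.eq_empty_or_nonempty with rfl | ⟨a, ha⟩
    · exact ⟨1, by simp, by simp⟩
    · have hfa : f a ∈ Multiset.map g s.val := by
        rw [← h]; exact Multiset.mem_map_of_mem f ha
      obtain ⟨b, hbs, hgb⟩ := Multiset.mem_map.1 hfa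
      have hbs : b ∈ s := hbs
      set τab := Equiv.swap a b with hτab
      have hmaps : ∀ i ∈ s, τab i ∈ s := by
        intro i hi
        rcases eq_or_ne i a with rfl | hia
        · simpa [hτab, Equiv.swap_apply_left] using hbs
        rcases eq_or_ne i b with rfl | hib
        · simpa [hτab, Equiv.swap_apply_right] using ha
        · simpa [hτab, Equiv.swap_apply_of_ne_of_ne hia hib] using hi
      -- `swap a b` permutes `s.val`
      have himg : Multiset.map (⇑τab) s.val = s.val := by
        have h1 : (s.image (⇑τab)).val = Multiset.map (⇑τab) s.val :=
          Finset.image_val_of_injOn (τab.injective.injOn)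
        have h2 : s.image (⇑τab) = s := by
          apply Finset.eq_of_subset_of_card_le
          · intro y hy
            obtain ⟨i, hi, rfl⟩ := Finset.mem_image.1 hy
            exact hmaps i hi
          · rw [Finset.card_image_of_injective _ τab.injective]
        rw [← h1, h2]
      set g' : ℕ → ℝ := g ∘ ⇑τab with hg'
      have hg'a : g' a = f a := by
        simp [hg', hτab, Equiv.swap_apply_left, hgb]
      have h' : Multiset.map f s.val = Multiset.map g' s.val := by
        rw [hg', ← Multiset.map_map, himg, h]
      -- peel off `a`
      have hcons : s.val = a ::ₘ (s.erase a).val := by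
        rw [Finset.erase_val]; exact (Multiset.cons_erase (Finset.mem_def.1 ha)).symm
      have herase : Multiset.map f (s.erase a).val = Multiset.map g' (s.erase a).val := by
        have := h'
        rw [hcons, Multiset.map_cons, Multiset.map_cons, hg'a] at this
        exact (Multiset.cons_inj_right _).1 this
      obtain ⟨τ', hτ'supp, hτ'⟩ := ih (s.erase a) (Finset.erase_ssubset ha) f g' herase
      refine ⟨τab * τ', ?_, ?_⟩
      · intro i hi
        by_contra his
        have h1 : τ' i = i := by
          by_contra hne
          exact his (Finset.mem_coe.1 (Finset.mem_of_mem_erase (hτ'supp hne)))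
        have h2 : τab i = i := by
          have hia : i ≠ a := fun hia => his (hia ▸ ha)
          have hib : i ≠ b := fun hib => his (hib ▸ hbs)
          exact Equiv.swap_apply_of_ne_of_ne hia hib
        exact hi (by simp [Equiv.Perm.mul_apply, h1, h2])
      · intro i hi
        rcases eq_or_ne i a with rfl | hia
        · have h1 : τ' i = i := by
            by_contra hne
            exact (Finset.notMem_erase i s) (hτ'supp hne)
          simp only [Equiv.Perm.mul_apply, h1, hτab, Equiv.swap_apply_left]
          exact hgb.symm
        · have := hτ' i (Finset.mem_erase.2 ⟨hia, hi⟩)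
          simpa [Equiv.Perm.mul_apply, hg'] using this

theorem stmt8 (n x : ℕ) (hn : 1 ≤ n) (hx : 2 ≤ x) (Δinc : ℝ) (hΔ : 0 < Δinc)
    (w w' : ℕ → ℝ) (hw : ∀ k ∈ Finset.Icc 1 x, w k ∈ Set.Ioo (0 : ℝ) 1)
    (hperm : Multiset.map w (Finset.Icc 1 x).val = Multiset.map w' (Finset.Icc 1 x).val)
    (hsorted : ∀ i ∈ Finset.Icc 1 x, ∀ j ∈ Finset.Icc 1 x, i ≤ j → w' j ≤ w' i) :
    totalRepairTime n x Δinc w' ≤ totalRepairTime n x Δinc w := by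
  classical
  set c : ℕ → ℝ := fun k => ((n : ℝ) + 1) ^ (x - k) with hc
  -- reduce to the weighted sum inequality
  have key : ∑ k ∈ Icc 1 x, c k * w k ≤ ∑ k ∈ Icc 1 x, c k * w' k := by
    obtain ⟨σ, hσsupp, hσ⟩ := exists_perm_of_map_eq (Icc 1 x) w w' hperm
    have hmono : MonovaryOn c w' (Icc 1 x : Finset ℕ) := by
      intro i hi j hj hlt
      have hji : j ≤ i := by
        by_contra hij
        exact absurd (hsorted i hi j hj (by omega)) (not_le.2 hlt)
      have : x - i ≤ x - j := by omega
      have hb : (0:ℝ) ≤ n := Nat.cast_nonneg n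
      exact pow_le_pow_right₀ (by linarith) this
    have := hmono.sum_mul_comp_perm_le_sum_mul hσsupp
    calc ∑ k ∈ Icc 1 x, c k * w k = ∑ k ∈ Icc 1 x, c k * w' (σ k) :=
          Finset.sum_congr rfl fun k hk => by rw [hσ k hk]
      _ ≤ ∑ k ∈ Icc 1 x, c k * w' k := this
  have hS : (repairES n w' x).2 ≤ (repairES n w x).2 := by
    rw [repairS_eq, repairS_eq]
    have h1 : ∀ v : ℕ → ℝ, ∑ k ∈ Icc 1 x, ((n : ℝ) + 1) ^ (x - k) * (1 - v k)
        = (∑ k ∈ Icc 1 x, c k) - ∑ k ∈ Icc 1 x, c k * v k := by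
      intro v
      rw [← Finset.sum_sub_distrib]
      exact Finset.sum_congr rfl fun k _ => by rw [hc]; ring
    rw [h1 w, h1 w']
    linarith
  unfold totalRepairTime
  rw [← Finset.sum_div, ← Finset.sum_div, sum_oneSubE, sum_oneSubE]
  gcongr
end

section
/- Let y nodes with initial healths v_0^{i_1}, ..., v_0^{i_y} ∈ (0,1) and deterioration rates Δ^{i_j} > 0 all be permanently repaired by some repair sequence, where a node not targeted at a step loses its deterioration rate in health, at most one node is targeted per step, and a node permanently fails upon reaching health ≤ 0. Then there exists an ordering (a permutation) i_1, ..., i_y of these nodes such that v_0^{i_j} > (y − j)·Δ^{i_j} for every j ∈ {1, ..., y}. -/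
lemma fin_strictMono_le {y : ℕ} (f : Fin y → ℕ) (hf : StrictMono f) :
    ∀ k : Fin y, (k : ℕ) ≤ f k := by
  suffices H : ∀ n (hn : n < y), n ≤ f ⟨n, hn⟩ by
    intro k; exact H k.1 k.2
  intro n
  induction n with
  | zero => intro _; exact Nat.zero_le _
  | succ n ih =>
    intro hn
    have h1 : n < y := Nat.lt_of_succ_lt hn
    have : f ⟨n, h1⟩ < f ⟨n + 1, hn⟩ := hf (by simp [Fin.lt_def])
    exact Nat.lt_of_le_of_lt (ih h1) this

theorem stmt9 (y : ℕ) (hy : 1 ≤ y) (v Δ inc : Fin y → ℝ)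
    (hv : ∀ j, v j ∈ Set.Ioo (0 : ℝ) 1) (hΔ : ∀ j, 0 < Δ j) (hinc : ∀ j, 0 < inc j)
    (u : ℕ → Option (Fin y)) (h : Fin y → ℕ → ℝ)
    (h0 : ∀ j, h j 0 = v j)
    (hstep : ∀ j t, h j (t + 1) =
      if h j t = 1 then 1
      else if h j t = 0 then 0
      else if u t = some j then min 1 (h j t + inc j) else max 0 (h j t - Δ j))
    (hrep : ∀ j, ∃ t, h j t = 1) :
    ∃ σ : Equiv.Perm (Fin y),
      ∀ j : Fin y, v (σ j) > ((y - 1 - (j : ℕ) : ℕ) : ℝ) * Δ (σ j) := by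
  -- 0 and 1 are absorbing
  have zero_persists : ∀ j t s, h j t = 0 → h j (t + s) = 0 := by
    intro j t s h0'
    induction s with
    | zero => exact h0'
    | succ s ih =>
      rw [← Nat.add_assoc, hstep, ih]
      norm_num
  have one_persists : ∀ j t s, h j t = 1 → h j (t + s) = 1 := by
    intro j t s h1
    induction s with
    | zero => exact h1
    | succ s ih =>
      rw [← Nat.add_assoc, hstep, ih]
      norm_num
  -- h j t is never 0
  have hne0 : ∀ j t, h j t ≠ 0 := by
    intro j t h0'
    obtain ⟨t', h1⟩ := hrep j
    have e0 := zero_persists j t t' h0'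
    have e1 := one_persists j t' t h1
    rw [Nat.add_comm] at e1
    rw [e0] at e1
    norm_num at e1
  -- each node is targeted at some time
  have htarg : ∀ j, ∃ t, u t = some j := by
    intro j
    by_contra hc
    push_neg at hc
    have hlt1 : ∀ t, h j t < 1 := by
      intro t
      induction t with
      | zero => rw [h0]; exact (hv j).2
      | succ t ih =>
        rw [hstep, if_neg (ne_of_lt ih)]
        by_cases h0' : h j t = 0
        · rw [if_pos h0']; norm_num
        · rw [if_neg h0', if_neg (hc t)]
          have : h j t - Δ j < 1 := by linarith [hΔ j]
          exact max_lt (by norm_num) this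
    obtain ⟨t', h1⟩ := hrep j
    exact absurd h1 (ne_of_lt (hlt1 t'))
  -- first targeting time
  set T : Fin y → ℕ := fun j => Nat.find (htarg j) with hT
  have hTspec : ∀ j, u (T j) = some j := fun j => Nat.find_spec (htarg j)
  have hTmin : ∀ j t, t < T j → u t ≠ some j := fun j t ht => Nat.find_min (htarg j) ht
  -- before first targeting, the health is v - t Δ and in (0,1)
  have key : ∀ j t, t ≤ T j → h j t = v j - t * Δ j ∧ h j t < 1 := by
    intro j t
    induction t with
    | zero => intro _; rw [h0]; exact ⟨by ring, (hv j).2⟩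
    | succ t ih =>
      intro hts
      obtain ⟨heq, hlt⟩ := ih (Nat.le_of_succ_le hts)
      have hne1 : h j t ≠ 1 := ne_of_lt hlt
      have hnt : u t ≠ some j := hTmin j t (Nat.lt_of_succ_le hts)
      have hs : h j (t + 1) = max 0 (h j t - Δ j) := by
        rw [hstep, if_neg hne1, if_neg (hne0 j t), if_neg hnt]
      have hpos : 0 < h j t - Δ j := by
        rcases lt_or_ge 0 (h j t - Δ j) with hp | hp
        · exact hp
        · exfalso; apply hne0 j (t + 1); rw [hs, max_eq_left hp]
      constructor
      · rw [hs, max_eq_right (le_of_lt hpos), heq]; push_cast; ring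
      · rw [hs, max_eq_right (le_of_lt hpos)]; linarith [hΔ j]
  -- hence v j > T j * Δ j
  have hvT : ∀ j, (T j : ℝ) * Δ j < v j := by
    intro j
    have := (key j (T j) le_rfl).1
    have hnn : ∀ s, 0 ≤ h j s := by
      intro s
      induction s with
      | zero => rw [h0]; exact le_of_lt (hv j).1
      | succ s ih =>
        rw [hstep]
        split
        · norm_num
        · split
          · norm_num
          · split
            · exact le_min (by norm_num) (by linarith [hinc j])
            · exact le_max_left 0 _
    have hp : 0 < h j (T j) := lt_of_le_of_ne (hnn (T j)) (Ne.symm (hne0 j (T j)))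
    linarith
  -- T is injective
  have hTinj : Function.Injective T := by
    intro a b hab
    have := hTspec a
    rw [hab, hTspec b] at this
    exact (Option.some_inj.mp this).symm
  -- sort
  set τ := Tuple.sort T with hτ
  have hmono : Monotone (T ∘ τ) := Tuple.monotone_sort T
  have hsm : StrictMono (T ∘ τ) :=
    hmono.strictMono_of_injective (hTinj.comp τ.injective)
  refine ⟨Fin.revPerm.trans τ, fun j => ?_⟩
  have hle : ((j.rev : ℕ) : ℕ) ≤ T (τ j.rev) := fin_strictMono_le (T ∘ τ) hsm j.rev
  have hrev : (j.rev : ℕ) = y - 1 - (j : ℕ) := by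
    rw [Fin.val_rev]; omega
  have hΔpos := hΔ (τ j.rev)
  have : ((y - 1 - (j : ℕ) : ℕ) : ℝ) ≤ (T (τ j.rev) : ℝ) := by
    rw [← hrev]; exact_mod_cast hle
  have := hvT (τ j.rev)
  simp only [Equiv.trans_apply, Fin.revPerm_apply]
  nlinarith
end

section
/- In the repair model with rates Δ_dec^j = Δ_inc^j = 1/(2(2^{M}−1)+3) and initial health v_0^j = (2(2^{M}−1)+1)/(2(2^{M}−1)+3) for every node j (for a fixed positive integer M), if nodes are repaired one after another in a non-jumping sequence starting at time 0 (each node deteriorating by Δ_dec per step while waiting), then the i-th node in the sequence takes exactly 2^i time-steps to go from its current health to full health, and hence the i-th node begins being targeted at time-step 2(2^{i-1} − 1). -/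
theorem stmt11 (M : ℕ) (hM : 1 ≤ M) (Δ v0 : ℝ)
    (hΔ : Δ = 1 / (2 * ((2 : ℝ) ^ M - 1) + 3))
    (hv0 : v0 = (2 * ((2 : ℝ) ^ M - 1) + 1) / (2 * ((2 : ℝ) ^ M - 1) + 3))
    (start : ℕ → ℝ) (hs1 : start 1 = 0)
    (hrec : ∀ i, 1 ≤ i → start (i + 1) = start i + (1 - (v0 - start i * Δ)) / Δ) :
    ∀ i, 1 ≤ i →
      (1 - (v0 - start i * Δ)) / Δ = 2 ^ i ∧ start i = 2 * ((2 : ℝ) ^ (i - 1) - 1) := by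
  have hc : (0:ℝ) < 2 * ((2 : ℝ) ^ M - 1) + 3 := by
    have : (1:ℝ) ≤ (2:ℝ) ^ M := one_le_pow₀ (by norm_num)
    nlinarith
  have hΔpos : 0 < Δ := by rw [hΔ]; positivity
  have hΔne : Δ ≠ 0 := ne_of_gt hΔpos
  have hgap : 1 - v0 = 2 * Δ := by
    rw [hv0, hΔ]; field_simp; ring
  have key : ∀ i, 1 ≤ i → start i = 2 * ((2 : ℝ) ^ (i - 1) - 1) := by
    intro i hi
    induction i with
    | zero => omega
    | succ n ih =>
      rcases Nat.eq_or_lt_of_le hi with h | h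
      · simp [← h, hs1]
      · have hn : 1 ≤ n := by omega
        have hsn := ih hn
        rw [hrec n hn, hsn]
        have : 1 - (v0 - 2 * ((2 : ℝ) ^ (n - 1) - 1) * Δ)
            = (2 + 2 * ((2 : ℝ) ^ (n - 1) - 1)) * Δ := by
          nlinarith [hgap]
        rw [this, mul_div_assoc, div_self hΔne, mul_one]
        have hn' : n - 1 + 1 = n := by omega
        have : (2:ℝ) ^ n = 2 * (2:ℝ) ^ (n-1) := by
          conv_lhs => rw [← hn']
          rw [pow_succ]; ring
        simp only [Nat.add_sub_cancel]
        rw [show (2:ℝ)^n = 2 * (2:ℝ)^(n-1) from this]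
        ring
  intro i hi
  refine ⟨?_, key i hi⟩
  rw [key i hi]
  have h2 : (2:ℝ) ^ i = 2 * (2:ℝ) ^ (i-1) := by
    rw [← pow_succ']; congr 1; omega
  field_simp
  nlinarith [hgap]
end
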